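/- arXiv:1304.3928 — 2 statements merged into one kernel-verified Lean document; each statement's English description precedes it below -/
import Mathlib

section
/- Let m ≥ 2 be a natural number, let q be a positive rational number, and let b be a positive real number such that b² is rational. If the principal argument of the complex number q + bi equals π/(m+1), then m = 2, m = 3 or m = 5. -/
open Complex Real

lemma exp_two_pi_div_integral (n : ℕ) (hn : 0 < n) (k : ℤ) :
    IsIntegral ℤ (Complex.exp (k * (2 * Real.pi / n) * Complex.I)) := by
  refine ⟨Polynomial.X ^ n - 1, ?_, ?_⟩
  · simpa using Polynomial.monic_X_pow_sub_C (1:ℤ) hn.ne'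
  · simp only [Polynomial.eval₂_sub, Polynomial.eval₂_X_pow, Polynomial.eval₂_one]
    rw [← Complex.exp_nat_mul]
    have h : (n : ℂ) * (k * (2 * Real.pi / n) * Complex.I) = k * (2 * Real.pi * Complex.I) := by
      have hn' : (n : ℂ) ≠ 0 := Nat.cast_ne_zero.2 hn.ne'
      field_simp
    rw [h, Complex.exp_int_mul, Complex.exp_two_pi_mul_I, one_zpow, sub_self]

lemma two_cos_integral (n : ℕ) (hn : 0 < n) :
    IsIntegral ℤ ((2 : ℂ) * Complex.cos (((2 * Real.pi / n : ℝ) : ℂ))) := by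
  rw [Complex.two_cos]
  have h1 := exp_two_pi_div_integral n hn 1
  have h2 := exp_two_pi_div_integral n hn (-1)
  norm_num at h1 h2
  have e1 : ((2 * Real.pi / n : ℝ) : ℂ) * Complex.I = (2 * Real.pi / n : ℂ) * Complex.I := by
    push_cast; ring
  have e2 : -((2 * Real.pi / n : ℝ) : ℂ) * Complex.I = -((2 * Real.pi / n : ℂ) * Complex.I) := by
    push_cast; ring
  rw [e1, e2]
  exact h1.add h2

theorem dim_eq_two_three_five (m : ℕ) (hm : 2 ≤ m) (q : ℚ) (hq : 0 < q)
    (b : ℝ) (hb : 0 < b) (hb2 : ∃ r : ℚ, b ^ 2 = (r : ℝ))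
    (harg : Complex.arg ((q : ℂ) + b * Complex.I) = Real.pi / (m + 1)) :
    m = 2 ∨ m = 3 ∨ m = 5 := by
  obtain ⟨r, hr⟩ := hb2
  set n : ℕ := m + 1 with hn
  have hn3 : 3 ≤ n := by omega
  have hmn : m = n - 1 := by omega
  clear_value n
  have hnR : (3:ℝ) ≤ n := by exact_mod_cast hn3
  have hnpos : (0:ℝ) < n := by linarith
  set z : ℂ := (q : ℂ) + b * Complex.I with hz
  have hre : z.re = q := by simp [hz]
  have him : z.im = b := by simp [hz]
  have hz0 : z ≠ 0 := by
    intro h; rw [h] at him; simp at him; linarith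
  have habs : (0:ℝ) < ‖z‖ := norm_pos_iff.mpr hz0
  have harg' : Complex.arg z = Real.pi / n := by
    rw [harg]; norm_num [hn]
  have hcos : Real.cos (Real.pi / n) = q / ‖z‖ := by
    rw [← harg', Complex.cos_arg hz0, hre]
  have hsin : Real.sin (Real.pi / n) = b / ‖z‖ := by
    rw [← harg', Complex.sin_arg, him]
  have habs2 : ‖z‖ ^ 2 = q ^ 2 + b ^ 2 := by
    rw [Complex.sq_norm, Complex.normSq_apply, hre, him]; ring
  have hcos2 : Real.cos (2 * Real.pi / n) = ((q:ℝ) ^ 2 - b ^ 2) / ((q:ℝ)^2 + b^2) := by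
    have h : (2:ℝ) * Real.pi / n = 2 * (Real.pi / n) := by ring
    rw [h, Real.cos_two_mul', hcos, hsin, div_pow, div_pow, div_sub_div_same, habs2]
  have hrpos : (0:ℚ) < r := by
    have : (0:ℝ) < (r:ℝ) := by rw [← hr]; positivity
    exact_mod_cast this
  set c : ℚ := 2 * (q ^ 2 - r) / (q ^ 2 + r) with hc
  have hden : (0:ℚ) < q^2 + r := by positivity
  have hdenR : (0:ℝ) < (q:ℝ)^2 + b^2 := by positivity
  have hcR : (c : ℝ) = 2 * Real.cos (2 * Real.pi / n) := by
    rw [hcos2, hc]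
    push_cast
    rw [← hr]
    field_simp
  have hint : IsIntegral ℤ c := by
    rw [← isIntegral_algebraMap_iff (algebraMap ℚ ℂ).injective]
    have heq : (algebraMap ℚ ℂ) c = (2 : ℂ) * Complex.cos (((2 * Real.pi / n : ℝ) : ℂ)) := by
      rw [show (algebraMap ℚ ℂ) c = ((c:ℝ):ℂ) by push_cast; rfl, hcR]
      push_cast [Complex.ofReal_cos]
      ring
    rw [heq]
    exact two_cos_integral n (by omega)
  obtain ⟨k, hk⟩ := IsIntegrallyClosed.isIntegral_iff.mp hint
  have hpi := Real.pi_pos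
  have hang_pos : 0 < 2 * Real.pi / n := by positivity
  have hang_le : 2 * Real.pi / n ≤ 2 * Real.pi / 3 :=
    div_le_div_of_nonneg_left (by positivity) (by norm_num) hnR
  have h23 : (2 * Real.pi / 3) ≤ Real.pi := by linarith
  have hcos23 : Real.cos (2 * Real.pi / 3) = -(1/2) := by
    rw [show (2 * Real.pi / 3) = Real.pi - Real.pi / 3 by ring, Real.cos_pi_sub,
      Real.cos_pi_div_three]
  have hlow : Real.cos (2 * Real.pi / 3) ≤ Real.cos (2 * Real.pi / n) :=
    Real.cos_le_cos_of_nonneg_of_le_pi hang_pos.le h23 hang_le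
  have hkR : (k : ℝ) = 2 * Real.cos (2 * Real.pi / n) := by
    rw [← hcR, ← hk]; rfl
  have hk1 : -1 ≤ k := by
    have h1 : (-1:ℝ) ≤ (k:ℝ) := by rw [hkR]; rw [hcos23] at hlow; linarith
    exact_mod_cast h1
  have hk2 : k ≤ 2 := by
    have h1 : (k:ℝ) ≤ 2 := by
      rw [hkR]; linarith [Real.cos_le_one (2 * Real.pi / n)]
    exact_mod_cast h1
  have hmem : 2 * Real.pi / n ∈ Set.Icc 0 Real.pi := ⟨hang_pos.le, le_trans hang_le h23⟩
  have key : ∀ a : ℝ, 0 ≤ a → a ≤ Real.pi →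
      Real.cos (2 * Real.pi / n) = Real.cos a → 2 * Real.pi / n = a := by
    intro a h1 h2 h3
    exact Real.injOn_cos hmem ⟨h1, h2⟩ h3
  interval_cases k
  · -- k = -1 : angle = 2π/3 → n = 3 → m = 2
    have heq : Real.cos (2 * Real.pi / n) = Real.cos (2 * Real.pi / 3) := by
      rw [hcos23]; push_cast at hkR; linarith
    have hang := key _ (by positivity) h23 heq
    rw [div_eq_iff hnpos.ne'] at hang
    have h4 : Real.pi * (n:ℝ) = Real.pi * 3 := by linarith
    have hnn : (n:ℝ) = 3 := mul_left_cancel₀ hpi.ne' h4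
    left; have h3 : n = 3 := by exact_mod_cast hnn
    omega
  · -- k = 0 : angle = π/2 → n = 4 → m = 3
    have heq : Real.cos (2 * Real.pi / n) = Real.cos (Real.pi / 2) := by
      rw [Real.cos_pi_div_two]; push_cast at hkR; linarith
    have hang := key _ (by positivity) (by linarith) heq
    rw [div_eq_iff hnpos.ne'] at hang
    have h4 : Real.pi * (n:ℝ) = Real.pi * 4 := by linarith
    have hnn : (n:ℝ) = 4 := mul_left_cancel₀ hpi.ne' h4
    right; left; have h3 : n = 4 := by exact_mod_cast hnn
    omega
  · -- k = 1 : angle = π/3 → n = 6 → m = 5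
    have heq : Real.cos (2 * Real.pi / n) = Real.cos (Real.pi / 3) := by
      rw [Real.cos_pi_div_three]; push_cast at hkR; linarith
    have hang := key _ (by positivity) (by linarith) heq
    rw [div_eq_iff hnpos.ne'] at hang
    have h4 : Real.pi * (n:ℝ) = Real.pi * 6 := by linarith
    have hnn : (n:ℝ) = 6 := mul_left_cancel₀ hpi.ne' h4
    right; right; have h3 : n = 6 := by exact_mod_cast hnn
    omega
  · -- k = 2 : angle = 0, contradiction
    exfalso
    have heq : Real.cos (2 * Real.pi / n) = Real.cos 0 := by
      rw [Real.cos_zero]; push_cast at hkR; linarith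
    have hang := key 0 le_rfl hpi.le heq
    linarith
end

section
/- Let A be a commutative ring which is an ℝ-algebra, let a, h ∈ A, and let b, t be real numbers with b ≠ 0. Assume a·a = (−b²)·(h·h), where the real scalar acts via the algebra structure. Then for every natural number m, (t·h + a)^{m+1} = Re((t + bi)^{m+1})·h^{m+1} + (Im((t + bi)^{m+1})/b)·(h^m · a), where t + bi is a complex number and again real scalars act via the algebra structure. -/
open Complex

theorem de_moivre_in_algebra {A : Type*} [CommRing A] [Algebra ℝ A]
    (a h : A) (b t : ℝ) (hb : b ≠ 0)
    (hsq : a * a = (-(b ^ 2)) • (h * h)) (m : ℕ) :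
    (t • h + a) ^ (m + 1) =
      (((t : ℂ) + b * Complex.I) ^ (m + 1)).re • h ^ (m + 1) +
        ((((t : ℂ) + b * Complex.I) ^ (m + 1)).im / b) • (h ^ m * a) := by
  induction m with
  | zero =>
    simp [div_self hb]
  | succ n ih =>
    have hsq' : a * a = -((algebraMap ℝ A b) ^ 2) * (h * h) := by
      rw [hsq, Algebra.smul_def, map_neg, map_pow]
    obtain ⟨c, hc⟩ : ∃ c, (((t:ℂ) + b * Complex.I) ^ (n+1)).im = c * b :=
      ⟨_ / b, (div_mul_cancel₀ _ hb).symm⟩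
    have hre : (((t:ℂ) + b * Complex.I) ^ (n+1+1)).re
        = (((t:ℂ) + b * Complex.I) ^ (n+1)).re * t - c * b * b := by
      rw [pow_succ, Complex.mul_re, hc]
      simp
    have him : (((t:ℂ) + b * Complex.I) ^ (n+1+1)).im
        = (((t:ℂ) + b * Complex.I) ^ (n+1)).im * t + (((t:ℂ) + b * Complex.I) ^ (n+1)).re * b := by
      rw [pow_succ, Complex.mul_im]
      simp
      ring
    rw [pow_succ (t • h + a), ih, hre, him, hc]
    have hdiv : (c * b * t + (((t:ℂ) + b * Complex.I) ^ (n+1)).re * b) / b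
        = c * t + (((t:ℂ) + b * Complex.I) ^ (n+1)).re := by
      field_simp
    have hdiv2 : (c * b) / b = c := mul_div_cancel_right₀ c hb
    rw [hdiv, hdiv2]
    simp only [Algebra.smul_def, map_add, map_mul, map_sub, map_neg, map_pow]
    linear_combination (algebraMap ℝ A c * h ^ n) * hsq'
end
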